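/- For every integer r ≥ 3 and integers n₁ ≥ n₂ ≥ ⋯ ≥ n_r ≥ 1, the maximum number of pairwise vertex-disjoint triangles in the complete r-partite graph K_{n₁,n₂,…,n_r} equals min{ ⌊(n₁+⋯+n_r)/3⌋, ⌊(n₂+⋯+n_r)/2⌋, n₃+⋯+n_r }. -/

import Mathlib

open Finset

/-- The complete `r`-partite graph with parts of sizes `n 0, n 1, …, n (r-1)`. -/
def Kpartite (r : ℕ) (n : ℕ → ℕ) : SimpleGraph ((i : Fin r) × Fin (n i)) :=
  SimpleGraph.completeMultipartiteGraph fun i : Fin r => Fin (n i)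

/-- The edge-coloring `c` contains a rainbow 3-cycle in `G`. -/
def RainbowC3 {V α : Type*} (G : SimpleGraph V) (c : Sym2 V → α) : Prop :=
  ∃ a b d : V, G.Adj a b ∧ G.Adj b d ∧ G.Adj d a ∧
    c s(a, b) ≠ c s(b, d) ∧ c s(b, d) ≠ c s(d, a) ∧ c s(a, b) ≠ c s(d, a)

/-- The edge-coloring `c` contains a rainbow 4-cycle in `G`. -/
def RainbowC4 {V α : Type*} (G : SimpleGraph V) (c : Sym2 V → α) : Prop :=
  ∃ a b d e : V, G.Adj a b ∧ G.Adj b d ∧ G.Adj d e ∧ G.Adj e a ∧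
    a ≠ d ∧ b ≠ e ∧
    c s(a, b) ≠ c s(b, d) ∧ c s(a, b) ≠ c s(d, e) ∧ c s(a, b) ≠ c s(e, a) ∧
    c s(b, d) ≠ c s(d, e) ∧ c s(b, d) ≠ c s(e, a) ∧ c s(d, e) ≠ c s(e, a)

/-- The coloring `c` uses every one of the `k` colors on at least one edge of `G`
(i.e. it uses exactly `k` colors). -/
def SurjOnEdges {V : Type*} {k : ℕ} (G : SimpleGraph V) (c : Sym2 V → Fin k) : Prop :=
  ∀ i : Fin k, ∃ e ∈ G.edgeSet, c e = i

/-- `G` contains `t` pairwise vertex-disjoint triangles. -/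
def HasDisjointTriangles {V : Type*} (G : SimpleGraph V) (t : ℕ) : Prop :=
  ∃ f : Fin t → Finset V, (∀ i, G.IsNClique 3 (f i)) ∧
    ∀ i j : Fin t, i ≠ j → Disjoint (f i) (f j)


lemma tripleFamily (r : ℕ) (hr : 3 ≤ r) :
    ∀ (t : ℕ) (c : Fin r → ℕ),
      3 * t ≤ ∑ p, c p →
      (∀ p, 2 * t + c p ≤ ∑ p, c p) →
      (∀ p q : Fin r, p ≠ q → t + c p + c q ≤ ∑ p, c p) →
      ∃ A B C : Fin t → Fin r,
        (∀ l, A l ≠ B l ∧ B l ≠ C l ∧ A l ≠ C l) ∧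
        ∀ p : Fin r, ((univ : Finset (Fin t)).filter
            (fun l => A l = p ∨ B l = p ∨ C l = p)).card ≤ c p := by
  intro t
  induction t with
  | zero =>
      intro c _ _ _
      exact ⟨Fin.elim0, Fin.elim0, Fin.elim0, fun l => l.elim0, fun p => by simp⟩
  | succ t ih =>
      intro c h3 h2 h1
      -- pick indices of the three largest values
      obtain ⟨i0, -, hi0⟩ := Finset.exists_max_image (univ : Finset (Fin r)) c ⟨⟨0, by omega⟩, mem_univ _⟩
      have hcard1 : ((univ : Finset (Fin r)).erase i0).Nonempty := by
        rw [← Finset.card_pos, Finset.card_erase_of_mem (mem_univ _)]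
        simp [Fintype.card_fin]; omega
      obtain ⟨j0, hj0mem, hj0⟩ := Finset.exists_max_image _ c hcard1
      have hij : j0 ≠ i0 := (Finset.mem_erase.mp hj0mem).1
      have hcard2 : (((univ : Finset (Fin r)).erase i0).erase j0).Nonempty := by
        rw [← Finset.card_pos, Finset.card_erase_of_mem hj0mem,
          Finset.card_erase_of_mem (mem_univ _)]
        simp [Fintype.card_fin]; omega
      obtain ⟨k0, hk0mem, hk0⟩ := Finset.exists_max_image _ c hcard2
      have hkj : k0 ≠ j0 := (Finset.mem_erase.mp hk0mem).1
      have hki : k0 ≠ i0 := (Finset.mem_erase.mp (Finset.mem_erase.mp hk0mem).2).1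
      have hji : c j0 ≤ c i0 := hi0 _ (mem_univ _)
      have hkjle : c k0 ≤ c j0 := hj0 _ (Finset.mem_erase.mp hk0mem).2
      -- any index outside {i0, j0} has value ≤ c k0
      have hk0max : ∀ p : Fin r, p ≠ i0 → p ≠ j0 → c p ≤ c k0 := by
        intro p hpi hpj
        exact hk0 p (by simp [Finset.mem_erase, hpi, hpj])
      -- c k0 ≥ 1
      have hck0 : 1 ≤ c k0 := by
        by_contra h
        push_neg at h
        have hzero : ∀ p : Fin r, p ≠ i0 → p ≠ j0 → c p = 0 := by
          intro p hpi hpj; have := hk0max p hpi hpj; omega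
        have hsum : ∑ p, c p = ∑ p ∈ ({i0, j0} : Finset (Fin r)), c p := by
          refine (Finset.sum_subset (Finset.subset_univ _) ?_).symm
          intro x _ hx
          simp only [Finset.mem_insert, Finset.mem_singleton, not_or] at hx
          exact hzero x hx.1 hx.2
        rw [Finset.sum_pair (Ne.symm hij)] at hsum
        have := h1 i0 j0 (Ne.symm hij)
        omega
      have hcj0 : 1 ≤ c j0 := le_trans hck0 hkjle
      have hci0 : 1 ≤ c i0 := le_trans hcj0 hji
      -- the decremented capacities
      set c' : Fin r → ℕ := fun p => if p = i0 ∨ p = j0 ∨ p = k0 then c p - 1 else c p with hc'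
      have hsum' : ∑ p, c p = (∑ p, c' p) + 3 := by
        have : ∀ p, c p = c' p + (if p = i0 ∨ p = j0 ∨ p = k0 then 1 else 0) := by
          intro p
          by_cases h : p = i0 ∨ p = j0 ∨ p = k0
          · have hcp : 1 ≤ c p := by rcases h with h | h | h <;> subst h <;> assumption
            simp [hc', h, Nat.sub_add_cancel hcp]
          · simp [hc', h]
        rw [Finset.sum_congr rfl (fun p _ => this p), Finset.sum_add_distrib]
        congr 1
        rw [← Finset.card_filter]
        have : (univ : Finset (Fin r)).filter (fun p => p = i0 ∨ p = j0 ∨ p = k0)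
            = {i0, j0, k0} := by
          ext x; simp [or_assoc]
        rw [this, Finset.card_insert_of_notMem (by simp [Ne.symm hij, Ne.symm hki]),
          Finset.card_insert_of_notMem (by simp [Ne.symm hkj]), Finset.card_singleton]
      -- helper: sums over distinct elements
      have sum4 : ∀ p : Fin r, p ≠ i0 → p ≠ j0 → p ≠ k0 →
          c i0 + c j0 + c k0 + c p ≤ ∑ q, c q := by
        intro p hpi hpj hpk
        calc c i0 + c j0 + c k0 + c p
            = ∑ q ∈ ({i0, j0, k0, p} : Finset (Fin r)), c q := by
              rw [Finset.sum_insert (by simp [Ne.symm hij, Ne.symm hki, Ne.symm hpi]),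
                Finset.sum_insert (by simp [Ne.symm hkj, Ne.symm hpj]),
                Finset.sum_insert (by simp [Ne.symm hpk]), Finset.sum_singleton]
              ring
          _ ≤ ∑ q, c q := Finset.sum_le_sum_of_subset (Finset.subset_univ _)
      have sum5 : ∀ p q : Fin r, p ≠ q → p ≠ i0 → p ≠ j0 → p ≠ k0 →
          q ≠ i0 → q ≠ j0 → q ≠ k0 →
          c i0 + c j0 + c k0 + c p + c q ≤ ∑ w, c w := by
        intro p q hpq hpi hpj hpk hqi hqj hqk
        calc c i0 + c j0 + c k0 + c p + c q
            = ∑ w ∈ ({i0, j0, k0, p, q} : Finset (Fin r)), c w := by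
              rw [Finset.sum_insert (by simp [Ne.symm hij, Ne.symm hki, Ne.symm hpi, Ne.symm hqi]),
                Finset.sum_insert (by simp [Ne.symm hkj, Ne.symm hpj, Ne.symm hqj]),
                Finset.sum_insert (by simp [Ne.symm hpk, Ne.symm hqk]),
                Finset.sum_insert (by simp [hpq]), Finset.sum_singleton]
              ring
          _ ≤ ∑ w, c w := Finset.sum_le_sum_of_subset (Finset.subset_univ _)
      -- hypotheses for the inductive step
      have h3' : 3 * t ≤ ∑ p, c' p := by omega
      have h2' : ∀ p, 2 * t + c' p ≤ ∑ p, c' p := by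
        intro p
        by_cases h : p = i0 ∨ p = j0 ∨ p = k0
        · have hcp : 1 ≤ c p := by rcases h with h | h | h <;> subst h <;> assumption
          have := h2 p
          have e : c' p = c p - 1 := by simp only [hc']; rw [if_pos h]
          omega
        · push_neg at h
          have hle := hk0max p h.1 h.2.1
          have h4 := sum4 p h.1 h.2.1 h.2.2
          have := h2 p
          have := h2 i0
          have := h1 i0 j0 (Ne.symm hij)
          have e : c' p = c p := by simp only [hc']; rw [if_neg (by tauto)]
          omega
      have h1' : ∀ p q : Fin r, p ≠ q → t + c' p + c' q ≤ ∑ p, c' p := by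
        intro p q hpq
        have hbase := h1 p q hpq
        by_cases hp : p = i0 ∨ p = j0 ∨ p = k0 <;>
          by_cases hq : q = i0 ∨ q = j0 ∨ q = k0
        · have hcp : 1 ≤ c p := by rcases hp with h | h | h <;> subst h <;> assumption
          have hcq : 1 ≤ c q := by rcases hq with h | h | h <;> subst h <;> assumption
          have e1 : c' p = c p - 1 := by simp only [hc']; rw [if_pos hp]
          have e2 : c' q = c q - 1 := by simp only [hc']; rw [if_pos hq]
          omega
        · -- p in triple, q outside
          push_neg at hq
          have hqle := hk0max q hq.1 hq.2.1
          have hcple : c p ≤ c i0 := by rcases hp with h | h | h <;> subst h <;> omega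
          have hcp : 1 ≤ c p := by rcases hp with h | h | h <;> subst h <;> assumption
          have h4 := sum4 q hq.1 hq.2.1 hq.2.2
          have := h1 i0 j0 (Ne.symm hij)
          have := h2 i0
          have e1 : c' p = c p - 1 := by simp only [hc']; rw [if_pos hp]
          have e2 : c' q = c q := by simp only [hc']; rw [if_neg (by tauto)]
          omega
        · -- q in triple, p outside
          push_neg at hp
          have hple := hk0max p hp.1 hp.2.1
          have hcqle : c q ≤ c i0 := by rcases hq with h | h | h <;> subst h <;> omega
          have hcq : 1 ≤ c q := by rcases hq with h | h | h <;> subst h <;> assumption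
          have h4 := sum4 p hp.1 hp.2.1 hp.2.2
          have := h1 i0 j0 (Ne.symm hij)
          have := h2 i0
          have e1 : c' q = c q - 1 := by simp only [hc']; rw [if_pos hq]
          have e2 : c' p = c p := by simp only [hc']; rw [if_neg (by tauto)]
          omega
        · -- both outside
          push_neg at hp; push_neg at hq
          have hple := hk0max p hp.1 hp.2.1
          have hqle := hk0max q hq.1 hq.2.1
          have h5 := sum5 p q hpq hp.1 hp.2.1 hp.2.2 hq.1 hq.2.1 hq.2.2
          have := h1 i0 j0 (Ne.symm hij)
          have := h1 j0 k0 (Ne.symm hkj)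
          have := h2 i0
          have e1 : c' p = c p := by simp only [hc']; rw [if_neg (by tauto)]
          have e2 : c' q = c q := by simp only [hc']; rw [if_neg (by tauto)]
          omega
      obtain ⟨A, B, C, hABC, hcount⟩ := ih c' h3' h2' h1'
      refine ⟨Fin.cons i0 A, Fin.cons j0 B, Fin.cons k0 C, ?_, ?_⟩
      · intro l
        refine Fin.cases ?_ ?_ l
        · simp [Ne.symm hij, hkj, hki, Ne.symm hki, Ne.symm hkj]
        · intro i; simp only [Fin.cons_succ]; exact hABC i
      · intro p
        rw [Finset.card_filter, Fin.sum_univ_succ, ← Finset.card_filter]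
        simp only [Fin.cons_zero, Fin.cons_succ]
        by_cases h : i0 = p ∨ j0 = p ∨ k0 = p
        · have hcp : 1 ≤ c p := by rcases h with h | h | h <;> subst h <;> assumption
          have hc'p : c' p = c p - 1 := by
            simp only [hc']
            rw [if_pos (by rcases h with h | h | h <;> subst h <;> tauto)]
          have := hcount p
          rw [if_pos h]
          omega
        · have hc'p : c' p = c p := by
            simp only [hc']
            rw [if_neg (by tauto)]
          have := hcount p
          rw [if_neg h]
          omega

lemma sigma_mk_eq {r : ℕ} {n : ℕ → ℕ} {p q : Fin r} {a : Fin (n p)} {b : Fin (n q)}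
    (h : (⟨p, a⟩ : (i : Fin r) × Fin (n i)) = ⟨q, b⟩) : p = q ∧ (a : ℕ) = (b : ℕ) := by
  obtain ⟨h1, h2⟩ := Sigma.mk.inj_iff.mp h
  subst h1
  exact ⟨rfl, congrArg Fin.val (eq_of_heq h2)⟩

lemma realizeTriangles (r : ℕ) (n : ℕ → ℕ) (t : ℕ)
    (A B C : Fin t → Fin r)
    (hdist : ∀ l, A l ≠ B l ∧ B l ≠ C l ∧ A l ≠ C l)
    (hcount : ∀ p : Fin r, ((univ : Finset (Fin t)).filter
        (fun l => A l = p ∨ B l = p ∨ C l = p)).card ≤ n p) :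
    HasDisjointTriangles (Kpartite r n) t := by
  classical
  set touch : Fin t → Fin r → Prop := fun l p => A l = p ∨ B l = p ∨ C l = p with htouch
  set pos : Fin t → Fin r → ℕ :=
    fun l p => ((univ : Finset (Fin t)).filter (fun l' => l' < l ∧ touch l' p)).card with hpos
  -- pos is strictly monotone on touching indices
  have hmono : ∀ (l l' : Fin t) (p : Fin r), touch l p → l < l' → pos l p < pos l' p := by
    intro l l' p hl hll'
    apply Finset.card_lt_card
    constructor
    · intro x hx
      simp only [Finset.mem_filter, Finset.mem_univ, true_and] at hx ⊢
      exact ⟨lt_trans hx.1 hll', hx.2⟩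
    · intro hsub
      have hmem : l ∈ (univ : Finset (Fin t)).filter (fun l'' => l'' < l' ∧ touch l'' p) := by
        simp only [Finset.mem_filter, Finset.mem_univ, true_and]
        exact ⟨hll', hl⟩
      have := hsub hmem
      simp only [Finset.mem_filter, Finset.mem_univ, true_and] at this
      exact absurd this.1 (lt_irrefl l)
  -- pos is below the capacity
  have hbound : ∀ (l : Fin t) (p : Fin r), touch l p → pos l p < n p := by
    intro l p hl
    have hlt : pos l p < ((univ : Finset (Fin t)).filter (fun l' => touch l' p)).card := by
      apply Finset.card_lt_card
      constructor
      · intro x hx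
        simp only [Finset.mem_filter, Finset.mem_univ, true_and] at hx ⊢
        exact hx.2
      · intro hsub
        have hmem : l ∈ (univ : Finset (Fin t)).filter (fun l' => touch l' p) := by
          simp only [Finset.mem_filter, Finset.mem_univ, true_and]; exact hl
        have := hsub hmem
        simp only [Finset.mem_filter, Finset.mem_univ, true_and] at this
        exact absurd this.1 (lt_irrefl l)
    exact lt_of_lt_of_le hlt (hcount p)
  -- the vertices
  have htA : ∀ l, touch l (A l) := fun l => Or.inl rfl
  have htB : ∀ l, touch l (B l) := fun l => Or.inr (Or.inl rfl)
  have htC : ∀ l, touch l (C l) := fun l => Or.inr (Or.inr rfl)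
  set vA : Fin t → (i : Fin r) × Fin (n i) :=
    fun l => ⟨A l, ⟨pos l (A l), hbound l (A l) (htA l)⟩⟩ with hvA
  set vB : Fin t → (i : Fin r) × Fin (n i) :=
    fun l => ⟨B l, ⟨pos l (B l), hbound l (B l) (htB l)⟩⟩ with hvB
  set vC : Fin t → (i : Fin r) × Fin (n i) :=
    fun l => ⟨C l, ⟨pos l (C l), hbound l (C l) (htC l)⟩⟩ with hvC
  -- key injectivity: vertices from different triangles differ
  have hkey : ∀ (l l' : Fin t), l ≠ l' →
      ∀ (p q : Fin r) (hp : touch l p) (hq : touch l' q),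
      (⟨p, ⟨pos l p, hbound l p hp⟩⟩ : (i : Fin r) × Fin (n i))
        ≠ ⟨q, ⟨pos l' q, hbound l' q hq⟩⟩ := by
    intro l l' hne p q hp hq heq
    obtain ⟨h1, h2⟩ := sigma_mk_eq heq
    subst h1
    rcases lt_or_gt_of_ne hne with h | h
    · exact absurd h2 (Nat.ne_of_lt (hmono l l' p hp h))
    · exact absurd h2.symm (Nat.ne_of_lt (hmono l' l p hq h))
  refine ⟨fun l => {vA l, vB l, vC l}, ?_, ?_⟩
  · intro l
    have hab : (A l) ≠ (B l) := (hdist l).1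
    have hbc : (B l) ≠ (C l) := (hdist l).2.1
    have hac : (A l) ≠ (C l) := (hdist l).2.2
    have hADJ : ∀ x y : (i : Fin r) × Fin (n i), x.1 ≠ y.1 → (Kpartite r n).Adj x y := by
      intro x y h
      exact h
    constructor
    · intro x hx y hy hxy
      simp only [Finset.coe_insert, Set.mem_insert_iff, Finset.coe_singleton,
        Set.mem_singleton_iff] at hx hy
      rcases hx with rfl | rfl | rfl <;> rcases hy with rfl | rfl | rfl <;>
        first
          | exact absurd rfl hxy
          | exact hADJ _ _ (by simp [hvA, hvB, hvC, hab, hbc, hac, Ne.symm hab, Ne.symm hbc, Ne.symm hac])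
    · rw [Finset.card_insert_of_notMem, Finset.card_insert_of_notMem, Finset.card_singleton]
      · simp only [Finset.mem_singleton]
        intro h
        exact hbc (sigma_mk_eq h).1
      · simp only [Finset.mem_insert, Finset.mem_singleton]
        rintro (h | h)
        · exact hab (sigma_mk_eq h).1
        · exact hac (sigma_mk_eq h).1
  · intro l l' hne
    rw [Finset.disjoint_left]
    intro x hx hx'
    simp only [Finset.mem_insert, Finset.mem_singleton] at hx hx'
    rcases hx with rfl | rfl | rfl <;> rcases hx' with h | h | h <;>
      first
        | exact hkey l l' hne _ _ (htA l) (htA l') h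
        | exact hkey l l' hne _ _ (htA l) (htB l') h
        | exact hkey l l' hne _ _ (htA l) (htC l') h
        | exact hkey l l' hne _ _ (htB l) (htA l') h
        | exact hkey l l' hne _ _ (htB l) (htB l') h
        | exact hkey l l' hne _ _ (htB l) (htC l') h
        | exact hkey l l' hne _ _ (htC l) (htA l') h
        | exact hkey l l' hne _ _ (htC l) (htB l') h
        | exact hkey l l' hne _ _ (htC l) (htC l') h

lemma card_filter_part (r : ℕ) (n : ℕ → ℕ) (k : ℕ) :
    ((univ : Finset ((i : Fin r) × Fin (n i))).filter (fun v => k ≤ (v.1 : ℕ))).card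
      = ∑ i ∈ Finset.Ico k r, n i := by
  classical
  rw [Finset.card_filter, ← Finset.univ_sigma_univ, Finset.sum_sigma]
  have hinner : ∀ i : Fin r, (∑ _j : Fin (n i), if k ≤ (i : ℕ) then 1 else 0)
      = if k ≤ (i : ℕ) then n i else 0 := by
    intro i
    by_cases h : k ≤ (i : ℕ) <;> simp [h]
  rw [Finset.sum_congr rfl (fun i _ => hinner i)]
  rw [Fin.sum_univ_eq_sum_range (fun i => if k ≤ i then n i else 0) r]
  rw [← Finset.sum_filter]
  congr 1
  ext x
  simp only [Finset.mem_filter, Finset.mem_range, Finset.mem_Ico]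
  omega

lemma triangle_bound (r : ℕ) (n : ℕ → ℕ) (t : ℕ)
    (h : HasDisjointTriangles (Kpartite r n) t) (k : ℕ) :
    (3 - k) * t ≤ ∑ i ∈ Finset.Ico k r, n i := by
  classical
  obtain ⟨f, hclq, hdisj⟩ := h
  have hinj : ∀ l : Fin t, Set.InjOn (fun v : (i : Fin r) × Fin (n i) => (v.1 : ℕ)) (f l) := by
    intro l x hx y hy hxy
    by_contra hne
    have hadj : (Kpartite r n).Adj x y := (hclq l).1 hx hy hne
    exact hadj (Fin.val_injective hxy)
  have hper : ∀ l : Fin t, 3 - k ≤ ((f l).filter (fun v => k ≤ (v.1 : ℕ))).card := by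
    intro l
    have hsplit := Finset.card_filter_add_card_filter_not
      (s := f l) (p := fun v => k ≤ (v.1 : ℕ))
    have hcard : (f l).card = 3 := (hclq l).2
    have hsmall : ((f l).filter (fun v => ¬ k ≤ (v.1 : ℕ))).card ≤ k := by
      have : ((f l).filter (fun v => ¬ k ≤ (v.1 : ℕ))).card ≤ (Finset.range k).card := by
        apply Finset.card_le_card_of_injOn (fun v => (v.1 : ℕ))
        · intro a ha
          simp only [Finset.mem_coe, Finset.mem_filter] at ha
          simp only [Finset.mem_coe, Finset.mem_range]
          omega
        · exact Set.InjOn.mono (fun a ha => (Finset.mem_filter.mp ha).1) (hinj l)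
      simpa using this
    omega
  have hdisjf : ∀ x ∈ (univ : Finset (Fin t)), ∀ y ∈ (univ : Finset (Fin t)), x ≠ y →
      Disjoint ((f x).filter (fun v => k ≤ (v.1 : ℕ))) ((f y).filter (fun v => k ≤ (v.1 : ℕ))) := by
    intro x _ y _ hxy
    exact Finset.disjoint_filter_filter (hdisj x y hxy)
  calc (3 - k) * t = ∑ _l : Fin t, (3 - k) := by simp [mul_comm]
    _ ≤ ∑ l : Fin t, ((f l).filter (fun v => k ≤ (v.1 : ℕ))).card :=
        Finset.sum_le_sum (fun l _ => hper l)
    _ = ((univ : Finset (Fin t)).biUnion (fun l => (f l).filter (fun v => k ≤ (v.1 : ℕ)))).card :=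
        (Finset.card_biUnion hdisjf).symm
    _ ≤ ((univ : Finset ((i : Fin r) × Fin (n i))).filter (fun v => k ≤ (v.1 : ℕ))).card := by
        apply Finset.card_le_card
        intro v hv
        simp only [Finset.mem_biUnion, Finset.mem_filter] at hv ⊢
        obtain ⟨l, -, hvl⟩ := hv
        exact ⟨Finset.mem_univ _, hvl.2⟩
    _ = ∑ i ∈ Finset.Ico k r, n i := card_filter_part r n k


/-- The maximum number of pairwise vertex-disjoint triangles in the complete
`r`-partite graph equals `min{⌊(n₁+⋯+n_r)/3⌋, ⌊(n₂+⋯+n_r)/2⌋, n₃+⋯+n_r}`. -/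
theorem max_disjoint_triangles_complete_multipartite (r : ℕ) (n : ℕ → ℕ) (hr : 3 ≤ r)
    (hmono : ∀ i j : ℕ, i ≤ j → j < r → n j ≤ n i)
    (hpos : ∀ i : ℕ, i < r → 1 ≤ n i) :
    IsGreatest {t : ℕ | HasDisjointTriangles (Kpartite r n) t}
      (min (min ((∑ i ∈ Finset.range r, n i) / 3) ((∑ i ∈ Finset.Ico 1 r, n i) / 2))
        (∑ i ∈ Finset.Ico 2 r, n i)) := by
  have hsplit1 : ∑ i ∈ Finset.range r, n i = n 0 + ∑ i ∈ Finset.Ico 1 r, n i := by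
    rw [Finset.range_eq_Ico, Finset.sum_eq_sum_Ico_succ_bot (by omega) n]
  have hsplit2 : ∑ i ∈ Finset.Ico 1 r, n i = n 1 + ∑ i ∈ Finset.Ico 2 r, n i :=
    Finset.sum_eq_sum_Ico_succ_bot (by omega) n
  have hFinSum : ∑ p : Fin r, n (p : ℕ) = ∑ i ∈ Finset.range r, n i :=
    Fin.sum_univ_eq_sum_range n r
  obtain ⟨N, hN⟩ : ∃ N, ∑ i ∈ Finset.range r, n i = N := ⟨_, rfl⟩
  obtain ⟨S2, hS2⟩ : ∃ S, ∑ i ∈ Finset.Ico 1 r, n i = S := ⟨_, rfl⟩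
  obtain ⟨S3, hS3⟩ : ∃ S, ∑ i ∈ Finset.Ico 2 r, n i = S := ⟨_, rfl⟩
  rw [hN] at hsplit1 hFinSum
  rw [hS2] at hsplit1 hsplit2
  rw [hS3] at hsplit2
  rw [hN, hS2, hS3]
  obtain ⟨T, hTdef⟩ : ∃ T, min (min (N / 3) (S2 / 2)) S3 = T := ⟨_, rfl⟩
  rw [hTdef]
  have hT3 : 3 * T ≤ N := by
    have h1 : T ≤ N / 3 := hTdef ▸ le_trans (min_le_left _ _) (min_le_left _ _)
    have := (Nat.le_div_iff_mul_le (by omega : 0 < 3)).mp h1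
    omega
  have hT2 : 2 * T ≤ S2 := by
    have h1 : T ≤ S2 / 2 := hTdef ▸ le_trans (min_le_left _ _) (min_le_right _ _)
    have := (Nat.le_div_iff_mul_le (by omega : 0 < 2)).mp h1
    omega
  have hT1 : T ≤ S3 := hTdef ▸ min_le_right _ _
  constructor
  · -- membership : T disjoint triangles exist
    obtain ⟨A, B, C, hdist, hcount⟩ := tripleFamily r hr T (fun p => n (p : ℕ))
      (by simpa only [hFinSum] using hT3)
      (by
        intro p
        have hp0 : n (p : ℕ) ≤ n 0 := hmono 0 (p : ℕ) (Nat.zero_le _) p.isLt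
        show 2 * T + n (p : ℕ) ≤ ∑ p : Fin r, n (p : ℕ)
        rw [hFinSum]
        omega)
      (by
        intro p q hpq
        show T + n (p : ℕ) + n (q : ℕ) ≤ ∑ p : Fin r, n (p : ℕ)
        rw [hFinSum]
        have hvalne : (p : ℕ) ≠ (q : ℕ) := fun h => hpq (Fin.val_injective h)
        rcases lt_or_gt_of_ne hvalne with h | h
        · have hq1 : n (q : ℕ) ≤ n 1 := hmono 1 (q : ℕ) (by omega) q.isLt
          have hp0 : n (p : ℕ) ≤ n 0 := hmono 0 (p : ℕ) (Nat.zero_le _) p.isLt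
          omega
        · have hp1 : n (p : ℕ) ≤ n 1 := hmono 1 (p : ℕ) (by omega) p.isLt
          have hq0 : n (q : ℕ) ≤ n 0 := hmono 0 (q : ℕ) (Nat.zero_le _) q.isLt
          omega)
    exact realizeTriangles r n T A B C hdist hcount
  · -- upper bound
    intro t ht
    have h0 := triangle_bound r n t ht 0
    have h1 := triangle_bound r n t ht 1
    have h2 := triangle_bound r n t ht 2
    rw [← Finset.range_eq_Ico, hN] at h0
    rw [hS2] at h1
    rw [hS3] at h2
    simp only [Nat.sub_zero] at h0 h1 h2
    rw [← hTdef]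
    refine le_min (le_min ?_ ?_) ?_
    · rw [Nat.le_div_iff_mul_le (by omega : 0 < 3)]; omega
    · rw [Nat.le_div_iff_mul_le (by omega : 0 < 2)]; omega
    · omega
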